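/- Let N ≥ 2 be an integer, α > −1 and λ > 0 real numbers, and define U_{α,λ}(x) := log( c_N (α+1)^N λ^{N−1} / (1 + λ |x|^{N(α+1)/(N−1)})^N ) with c_N := N (N²/(N−1))^{N−1}. Then for every x ∈ ℝ^N \ {0}, −div( |∇U_{α,λ}|^{N−2} ∇U_{α,λ} )(x) = |x|^{Nα} e^{U_{α,λ}(x)}, where div denotes the Euclidean divergence, and moreover the function x ↦ |x|^{Nα} e^{U_{α,λ}(x)} is integrable on ℝ^N. -/

import Mathlib

open MeasureTheory Filter
open scoped RealInnerProductSpace Topology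

noncomputable section

/-- The dimensional constant `c_N = N (N²/(N-1))^{N-1}`. -/
def cconst (N : ℕ) : ℝ := N * ((N : ℝ) ^ 2 / ((N : ℝ) - 1)) ^ (N - 1)

/-- The explicit radial family
`U_{α,λ}(x) = log( c_N (α+1)^N λ^{N-1} / (1 + λ|x|^{N(α+1)/(N-1)})^N )`. -/
def Ulam (N : ℕ) (α lam : ℝ) (x : EuclideanSpace ℝ (Fin N)) : ℝ :=
  Real.log (cconst N * (α + 1) ^ N * lam ^ (N - 1) /
    (1 + lam * ‖x‖ ^ ((N : ℝ) * (α + 1) / ((N : ℝ) - 1))) ^ N)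

/-- Euclidean divergence of a vector field on `ℝ^N`. -/
def ediv {N : ℕ} (F : EuclideanSpace ℝ (Fin N) → EuclideanSpace ℝ (Fin N))
    (x : EuclideanSpace ℝ (Fin N)) : ℝ :=
  ∑ i, fderiv ℝ F x (EuclideanSpace.single i 1) i

open Set Metric

lemma integrable_fun_norm_aux {N : ℕ} (hN : 1 ≤ N) {f : ℝ → ℝ}
    (hf : IntegrableOn (fun r => r ^ (N - 1) * f r) (Set.Ioi (0:ℝ))) :
    Integrable (fun x : EuclideanSpace ℝ (Fin N) => f ‖x‖) := by
  set E := EuclideanSpace ℝ (Fin N)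
  have hdim : Module.finrank ℝ E = N := finrank_euclideanSpace_fin
  haveI : Nontrivial E := Module.nontrivial_of_finrank_pos (R := ℝ)
    (by rw [hdim]; omega)
  set μ : Measure E := volume with hμ
  -- reduce to the subtype {0}ᶜ
  have h0 : MeasurableSet ({0}ᶜ : Set E) := (measurableSet_singleton 0).compl
  have hmap : Measure.map (Subtype.val : ({0}ᶜ : Set E) → E) (μ.comap Subtype.val) = μ := by
    rw [map_comap_subtype_coe h0, MeasureTheory.restrict_compl_singleton]
  have hemb : MeasurableEmbedding (Subtype.val : ({0}ᶜ : Set E) → E) :=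
    MeasurableEmbedding.subtype_coe h0
  rw [← hmap, hemb.integrable_map_iff]
  -- transfer through the polar homeomorphism
  have hpres := (μ.measurePreserving_homeomorphUnitSphereProd).integrable_comp_emb
    (Homeomorph.measurableEmbedding _)
    (g := fun p : sphere (0:E) 1 × Ioi (0:ℝ) => f p.2.1)
  have hcomp : ((fun p : sphere (0:E) 1 × Ioi (0:ℝ) => f p.2.1) ∘
      (homeomorphUnitSphereProd E)) = fun x : ({0}ᶜ : Set E) => f ‖(x : E)‖ := by
    funext x; simp only [Function.comp_apply, homeomorphUnitSphereProd_apply_snd_coe]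
  rw [hcomp] at hpres
  refine hpres.mpr ?_
  -- integrability of the fiber function
  have hIoi : Integrable (fun r : Ioi (0:ℝ) => f r.1)
      (MeasureTheory.Measure.volumeIoiPow (Module.finrank ℝ E - 1)) := by
    rw [MeasureTheory.Measure.volumeIoiPow, integrable_withDensity_iff]
    · have hmap2 : Measure.map (Subtype.val : Ioi (0:ℝ) → ℝ)
          (volume.comap Subtype.val) = volume.restrict (Ioi (0:ℝ)) :=
        map_comap_subtype_coe measurableSet_Ioi _
      have hemb2 : MeasurableEmbedding (Subtype.val : Ioi (0:ℝ) → ℝ) :=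
        MeasurableEmbedding.subtype_coe measurableSet_Ioi
      have : Integrable ((fun r : ℝ => r ^ (N-1) * f r) ∘ Subtype.val)
          (volume.comap (Subtype.val : Ioi (0:ℝ) → ℝ)) := by
        rw [← hemb2.integrable_map_iff, hmap2]; exact hf
      refine this.congr (Eventually.of_forall fun r => ?_)
      have hr : (0:ℝ) < r.1 := r.2
      simp only [Function.comp_apply, hdim]
      rw [ENNReal.toReal_ofReal (by positivity)]
      ring
    · exact (measurable_subtype_coe.pow_const _).ennreal_ofReal
    · exact Eventually.of_forall fun r => ENNReal.ofReal_lt_top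
  -- product with the finite sphere measure
  have hsm : AEStronglyMeasurable (fun p : sphere (0:E) 1 × Ioi (0:ℝ) => f p.2.1)
      ((μ.toSphere).prod (MeasureTheory.Measure.volumeIoiPow (Module.finrank ℝ E - 1))) :=
    AEStronglyMeasurable.comp_snd (hIoi.aestronglyMeasurable)
  rw [integrable_prod_iff hsm]
  refine ⟨Eventually.of_forall fun _ => hIoi, ?_⟩
  have hconst : (fun x : sphere (0:E) 1 => ∫ y : Ioi (0:ℝ),
      ‖f (((x, y).2 : Ioi (0:ℝ)) : ℝ)‖ ∂(MeasureTheory.Measure.volumeIoiPow (Module.finrank ℝ E - 1)))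
      = fun _ => ∫ y : Ioi (0:ℝ), ‖f (y : ℝ)‖
        ∂(MeasureTheory.Measure.volumeIoiPow (Module.finrank ℝ E - 1)) := rfl
  rw [hconst]
  exact integrable_const _

lemma oneD_integrable (N : ℕ) (hN : 2 ≤ N) (α lam : ℝ) (hα : -1 < α) (hlam : 0 < lam) :
    IntegrableOn (fun r : ℝ => r ^ (N - 1) *
      (r ^ ((N : ℝ) * α) * Real.exp (Real.log (cconst N * (α + 1) ^ N * lam ^ (N - 1) /
        (1 + lam * r ^ ((N : ℝ) * (α + 1) / ((N : ℝ) - 1))) ^ N)))) (Ioi (0:ℝ)) := by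
  have hn1 : (0:ℝ) < (N:ℝ) - 1 := by
    have : (2:ℝ) ≤ (N:ℝ) := by exact_mod_cast hN
    linarith
  have hNpos : (0:ℝ) < N := by linarith
  have ha1 : (0:ℝ) < α + 1 := by linarith
  set p : ℝ := (N : ℝ) * (α + 1) / ((N : ℝ) - 1) with hp_def
  have hp : 0 < p := by positivity
  set C : ℝ := cconst N * (α + 1) ^ N * lam ^ (N - 1) with hC_def
  have hcc : 0 < cconst N := by
    have : (0:ℝ) < (N:ℝ)^2 / ((N:ℝ) - 1) := by positivity
    unfold cconst; positivity
  have hC : 0 < C := by positivity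
  set K' : ℝ → ℝ := fun r => C * (r ^ (N - 1) * r ^ ((N:ℝ) * α)) / (1 + lam * r ^ p) ^ N
    with hK'_def
  have hD : ∀ r : ℝ, 0 < r → (1:ℝ) ≤ 1 + lam * r ^ p := fun r hr => by
    nlinarith [Real.rpow_pos_of_pos hr p, mul_pos hlam (Real.rpow_pos_of_pos hr p)]
  have hEq : ∀ r ∈ Ioi (0:ℝ), (fun r : ℝ => r ^ (N - 1) *
      (r ^ ((N : ℝ) * α) * Real.exp (Real.log (C / (1 + lam * r ^ p) ^ N)))) r = K' r := by
    intro r hr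
    have hr : (0:ℝ) < r := hr
    have hDpos : (0:ℝ) < (1 + lam * r ^ p) ^ N := pow_pos (lt_of_lt_of_le one_pos (hD r hr)) N
    dsimp only
    rw [Real.exp_log (by positivity)]
    simp only [hK'_def]
    ring
  have hcont : ContinuousOn K' (Ioi (0:ℝ)) := by
    apply ContinuousOn.div
    · exact (continuousOn_const.mul ((continuousOn_pow _).mul
        (continuousOn_id.rpow_const fun r hr => Or.inl (ne_of_gt hr))))
    · exact (continuousOn_const.add (continuousOn_const.mul
        (continuousOn_id.rpow_const fun r hr => Or.inl (ne_of_gt hr)))).pow N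
    · intro r hr
      exact ne_of_gt (pow_pos (lt_of_lt_of_le one_pos (hD r hr)) N)
  have hsplit : Ioc (0:ℝ) 1 ∪ Ioi (1:ℝ) = Ioi (0:ℝ) := Ioc_union_Ioi_eq_Ioi zero_le_one
  have hs1 : (-1:ℝ) < ((N:ℝ) - 1) + (N:ℝ) * α := by nlinarith
  have hrpow_eq : ∀ r : ℝ, 0 < r →
      r ^ (N - 1) * r ^ ((N:ℝ) * α) = r ^ (((N:ℝ) - 1) + (N:ℝ) * α) := by
    intro r hr
    rw [Real.rpow_add hr, ← Real.rpow_natCast r (N - 1)]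
    congr 2
    have : ((N - 1 : ℕ) : ℝ) = (N:ℝ) - 1 := by
      have : 1 ≤ N := by omega
      push_cast [Nat.cast_sub this]; ring
    rw [this]
  have h1 : IntegrableOn K' (Ioc (0:ℝ) 1) := by
    refine Integrable.mono' (g := fun r => C * r ^ (((N:ℝ) - 1) + (N:ℝ) * α)) ?_ ?_ ?_
    · exact (intervalIntegral.intervalIntegrable_rpow' hs1).1.const_mul C
    · exact (hcont.mono Ioc_subset_Ioi_self).aestronglyMeasurable measurableSet_Ioc
    · filter_upwards [ae_restrict_mem measurableSet_Ioc] with r hr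
      have hr0 : (0:ℝ) < r := hr.1
      have hDpos : (0:ℝ) < (1 + lam * r ^ p) ^ N := pow_pos (lt_of_lt_of_le one_pos (hD r hr0)) N
      have hK'nn : 0 ≤ K' r := by
        have := Real.rpow_pos_of_pos hr0 ((N:ℝ) * α)
        have := pow_pos hr0 (N-1)
        positivity
      rw [Real.norm_of_nonneg hK'nn, hK'_def]
      simp only
      rw [hrpow_eq r hr0]
      calc C * r ^ (((N:ℝ) - 1) + (N:ℝ) * α) / (1 + lam * r ^ p) ^ N
          ≤ C * r ^ (((N:ℝ) - 1) + (N:ℝ) * α) / 1 := by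
            apply div_le_div_of_nonneg_left _ one_pos _
            · positivity
            · exact one_le_pow₀ (hD r hr0)
        _ = C * r ^ (((N:ℝ) - 1) + (N:ℝ) * α) := by ring
  have hs2 : ((N:ℝ) - 1) + (N:ℝ) * α - p * N < -1 := by
    rw [hp_def]
    rw [div_mul_eq_mul_div, sub_lt_iff_lt_add, ← sub_lt_iff_lt_add']
    have h2 : ((N:ℝ) - 1) * (α + 1) < (N:ℝ) * (α + 1) := by nlinarith
    rw [lt_div_iff₀ hn1]
    nlinarith
  have h2 : IntegrableOn K' (Ioi (1:ℝ)) := by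
    refine Integrable.mono'
      (g := fun r => (C / lam ^ N) * r ^ (((N:ℝ) - 1) + (N:ℝ) * α - p * N)) ?_ ?_ ?_
    · exact (integrableOn_Ioi_rpow_of_lt hs2 one_pos).const_mul _
    · exact (hcont.mono (Ioi_subset_Ioi zero_le_one)).aestronglyMeasurable measurableSet_Ioi
    · filter_upwards [ae_restrict_mem measurableSet_Ioi] with r hr
      have hr0 : (0:ℝ) < r := lt_trans one_pos hr
      have hDpos : (0:ℝ) < (1 + lam * r ^ p) ^ N := pow_pos (lt_of_lt_of_le one_pos (hD r hr0)) N
      have hK'nn : 0 ≤ K' r := by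
        have := Real.rpow_pos_of_pos hr0 ((N:ℝ) * α)
        have := pow_pos hr0 (N-1)
        positivity
      rw [Real.norm_of_nonneg hK'nn, hK'_def]
      simp only
      rw [hrpow_eq r hr0]
      have hle : lam ^ N * r ^ (p * (N:ℝ)) ≤ (1 + lam * r ^ p) ^ N := by
        have h1 : lam * r ^ p ≤ 1 + lam * r ^ p := by
          nlinarith [mul_pos hlam (Real.rpow_pos_of_pos hr0 p)]
        have h2 : (lam * r ^ p) ^ N ≤ (1 + lam * r ^ p) ^ N := by
          apply pow_le_pow_left₀ (by positivity) h1
        calc lam ^ N * r ^ (p * (N:ℝ)) = (lam * r ^ p) ^ N := by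
              rw [mul_pow, ← Real.rpow_natCast (r ^ p) N, ← Real.rpow_mul hr0.le]
          _ ≤ _ := h2
      have hpowpos : (0:ℝ) < lam ^ N * r ^ (p * (N:ℝ)) := by
        have := Real.rpow_pos_of_pos hr0 (p * (N:ℝ))
        positivity
      calc C * r ^ (((N:ℝ) - 1) + (N:ℝ) * α) / (1 + lam * r ^ p) ^ N
          ≤ C * r ^ (((N:ℝ) - 1) + (N:ℝ) * α) / (lam ^ N * r ^ (p * (N:ℝ))) := by
            apply div_le_div_of_nonneg_left _ hpowpos hle
            positivity
        _ = (C / lam ^ N) * r ^ (((N:ℝ) - 1) + (N:ℝ) * α - p * N) := by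
            rw [Real.rpow_sub hr0]
            rw [show p * (N:ℝ) = (p * N : ℝ) from rfl]
            field_simp
    -- done
  have := (h1.union h2)
  rw [hsplit] at this
  exact this.congr_fun (fun r hr => (hEq r hr).symm) measurableSet_Ioi

/-- `U_{α,λ}` solves `-Δ_N u = |x|^{Nα} e^u` pointwise on `ℝ^N \ {0}` and has finite mass. -/
theorem statement18 (N : ℕ) (hN : 2 ≤ N) (α lam : ℝ) (hα : -1 < α) (hlam : 0 < lam) :
    (∀ x : EuclideanSpace ℝ (Fin N), x ≠ 0 →
      -ediv (fun y => ‖gradient (Ulam N α lam) y‖ ^ ((N : ℝ) - 2) •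
          gradient (Ulam N α lam) y) x
        = ‖x‖ ^ ((N : ℝ) * α) * Real.exp (Ulam N α lam x)) ∧
    Integrable (fun x : EuclideanSpace ℝ (Fin N) =>
      ‖x‖ ^ ((N : ℝ) * α) * Real.exp (Ulam N α lam x)) := by
  have hn2 : (2:ℝ) ≤ (N:ℝ) := by exact_mod_cast hN
  have hn1 : (0:ℝ) < (N:ℝ) - 1 := by linarith
  have hnpos : (0:ℝ) < (N:ℝ) := by linarith
  have ha1 : (0:ℝ) < α + 1 := by linarith
  set p : ℝ := (N:ℝ) * (α + 1) / ((N:ℝ) - 1) with hp_def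
  have hp : 0 < p := by positivity
  set q : ℝ := p / 2 with hq_def
  have hq : 0 < q := by positivity
  set C : ℝ := cconst N * (α + 1) ^ N * lam ^ (N - 1) with hC_def
  have hcc : 0 < cconst N := by
    have : (0:ℝ) < (N:ℝ) ^ 2 / ((N:ℝ) - 1) := by positivity
    unfold cconst; positivity
  have hC : 0 < C := by positivity
  set b : ℝ → ℝ := fun t => 1 + lam * t ^ q with hb_def
  have hb_pos : ∀ t : ℝ, 0 ≤ t → 0 < b t := by
    intro t ht
    have : 0 ≤ lam * t ^ q := mul_nonneg hlam.le (Real.rpow_nonneg ht q)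
    simp only [hb_def]; linarith
  set a : ℝ → ℝ := fun t => 2 * (N:ℝ) * lam * q * t ^ (q - 1) / b t with ha_def
  have ha_pos : ∀ t : ℝ, 0 < t → 0 < a t := by
    intro t ht
    have h1 : 0 < t ^ (q - 1) := Real.rpow_pos_of_pos ht _
    have h2 := hb_pos t ht.le
    simp only [ha_def]; positivity
  set A : ℝ := (2 * (N:ℝ) * lam * q) ^ ((N:ℝ) - 1) with hA_def
  set m : ℝ := (N:ℝ) * α / 2 with hm_def
  set σ : ℝ → ℝ := fun t => (-A) * (t ^ m * b t ^ (1 - (N:ℝ))) with hσ_def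
  set σ' : ℝ → ℝ := fun t => (-A) * (m * t ^ (m - 1) * b t ^ (1 - (N:ℝ)) +
      t ^ m * (lam * (q * t ^ (q - 1)) * (1 - (N:ℝ)) * b t ^ (1 - (N:ℝ) - 1))) with hσ'_def
  have hq2 : 2 * q * ((N:ℝ) - 1) = (N:ℝ) * (α + 1) := by
    rw [hq_def, hp_def]; field_simp
  have hm2 : 2 * m = (N:ℝ) * α := by rw [hm_def]; ring
  -- rewrite Ulam
  have hnorm_rpow : ∀ (y : EuclideanSpace ℝ (Fin N)), (‖y‖ ^ 2 : ℝ) ^ q = ‖y‖ ^ p := by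
    intro y
    rw [← Real.rpow_natCast ‖y‖ 2, ← Real.rpow_mul (norm_nonneg y)]
    norm_num
    rw [hq_def]
    ring_nf
  have hbnorm : ∀ (y : EuclideanSpace ℝ (Fin N)),
      b (‖y‖ ^ 2) = 1 + lam * ‖y‖ ^ ((N : ℝ) * (α + 1) / ((N : ℝ) - 1)) := by
    intro y
    rw [hb_def]
    simp only
    rw [hnorm_rpow y, hp_def]
  have hUeq : Ulam N α lam = fun y => Real.log C - N * Real.log (b (‖y‖ ^ 2)) := by
    funext y
    have hby : (0:ℝ) < b (‖y‖ ^ 2) := hb_pos _ (by positivity)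
    rw [hbnorm y] at hby
    unfold Ulam
    rw [hbnorm y, ← hC_def]
    rw [Real.log_div hC.ne' (by positivity), Real.log_pow]
  -- gradient
  have hφderiv : ∀ t : ℝ, 0 < t →
      HasDerivAt (fun s => Real.log C - N * Real.log (b s)) (-(a t / 2)) t := by
    intro t ht
    have hbt := hb_pos t ht.le
    have h1 : HasDerivAt (fun s : ℝ => s ^ q) (q * t ^ (q - 1)) t :=
      Real.hasDerivAt_rpow_const (Or.inl ht.ne')
    have h2 : HasDerivAt b (lam * (q * t ^ (q - 1))) t := by
      rw [hb_def]
      exact (h1.const_mul lam).const_add 1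
    have h3 : HasDerivAt (fun s => Real.log (b s)) (lam * (q * t ^ (q - 1)) / b t) t :=
      h2.log hbt.ne'
    have h4 := (h3.const_mul (N:ℝ)).const_sub (Real.log C)
    refine h4.congr_deriv ?_
    rw [ha_def]
    simp only
    field_simp
  have hgrad : ∀ y : EuclideanSpace ℝ (Fin N), y ≠ 0 →
      HasGradientAt (Ulam N α lam) ((-(a (‖y‖ ^ 2))) • y) y := by
    intro y hy
    have hyn : (0:ℝ) < ‖y‖ := norm_pos_iff.mpr hy
    have ht : (0:ℝ) < ‖y‖ ^ 2 := by positivity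
    have hsq : HasFDerivAt (fun z : EuclideanSpace ℝ (Fin N) => ‖z‖ ^ 2)
        (2 • innerSL ℝ y) y := (hasStrictFDerivAt_norm_sq y).hasFDerivAt
    have hcomp := (hφderiv _ ht).comp_hasFDerivAt y hsq
    have hcomp' : HasFDerivAt (Ulam N α lam)
        ((-(a (‖y‖ ^ 2) / 2)) • (2 • innerSL ℝ y)) y := by
      rw [hUeq]; exact hcomp
    rw [hasGradientAt_iff_hasFDerivAt]
    have heqCLM : (InnerProductSpace.toDual ℝ (EuclideanSpace ℝ (Fin N))) ((-(a (‖y‖ ^ 2))) • y)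
        = (-(a (‖y‖ ^ 2) / 2)) • (2 • innerSL ℝ y) := by
      ext v
      simp only [InnerProductSpace.toDual_apply_apply, ContinuousLinearMap.smul_apply,
        ContinuousLinearMap.coe_smul', Pi.smul_apply, innerSL_apply_apply, smul_eq_mul,
        real_inner_smul_left]
      ring
    rw [heqCLM]
    exact hcomp'
  -- scalar form of vector field
  have hapow : ∀ t : ℝ, 0 < t → (a t) ^ ((N:ℝ) - 1)
      = A * t ^ ((q - 1) * ((N:ℝ) - 1)) / b t ^ ((N:ℝ) - 1) := by
    intro t ht
    have hbt := hb_pos t ht.le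
    have htq : (0:ℝ) < t ^ (q - 1) := Real.rpow_pos_of_pos ht _
    have hc0 : (0:ℝ) < 2 * (N:ℝ) * lam * q := by positivity
    rw [ha_def]
    simp only
    rw [Real.div_rpow (by positivity) hbt.le, Real.mul_rpow hc0.le htq.le,
      ← Real.rpow_mul ht.le, ← hA_def]
  have hsigma_eq : ∀ y : EuclideanSpace ℝ (Fin N), y ≠ 0 →
      ‖(-(a (‖y‖ ^ 2))) • y‖ ^ ((N:ℝ) - 2) • ((-(a (‖y‖ ^ 2))) • y) = σ (‖y‖ ^ 2) • y := by
    intro y hy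
    have hyn : (0:ℝ) < ‖y‖ := norm_pos_iff.mpr hy
    have ht : (0:ℝ) < ‖y‖ ^ 2 := by positivity
    have hat := ha_pos _ ht
    have hbt := hb_pos _ ht.le
    rw [smul_smul]
    congr 1
    rw [norm_smul, Real.norm_eq_abs, abs_neg, abs_of_pos hat]
    rw [Real.mul_rpow hat.le (norm_nonneg y)]
    have h1 : ‖y‖ ^ ((N:ℝ) - 2) = (‖y‖ ^ 2 : ℝ) ^ (((N:ℝ) - 2) / 2) := by
      rw [← Real.rpow_natCast ‖y‖ 2, ← Real.rpow_mul (norm_nonneg y)]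
      norm_num
      congr 1
      ring
    have h2 : (a (‖y‖ ^ 2)) ^ ((N:ℝ) - 2) * (a (‖y‖ ^ 2))
        = (a (‖y‖ ^ 2)) ^ ((N:ℝ) - 1) := by
      rw [← Real.rpow_add_one hat.ne' ((N:ℝ) - 2)]
      congr 1
      ring
    have hexp : (q - 1) * ((N:ℝ) - 1) + ((N:ℝ) - 2) / 2 = m := by
      rw [hm_def]
      linear_combination hq2 / 2
    have h3 : (‖y‖ ^ 2 : ℝ) ^ ((q - 1) * ((N:ℝ) - 1)) * (‖y‖ ^ 2 : ℝ) ^ (((N:ℝ) - 2) / 2)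
        = (‖y‖ ^ 2 : ℝ) ^ m := by
      rw [← Real.rpow_add ht, hexp]
    have h4 : b (‖y‖ ^ 2) ^ (1 - (N:ℝ)) = (b (‖y‖ ^ 2) ^ ((N:ℝ) - 1))⁻¹ := by
      rw [show (1 - (N:ℝ)) = -((N:ℝ) - 1) by ring, Real.rpow_neg hbt.le]
    have hbpow : (0:ℝ) < b (‖y‖ ^ 2) ^ ((N:ℝ) - 1) := Real.rpow_pos_of_pos hbt _
    have h5 : (a (‖y‖ ^ 2)) ^ ((N:ℝ) - 1) * b (‖y‖ ^ 2) ^ ((N:ℝ) - 1)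
        = A * (‖y‖ ^ 2 : ℝ) ^ ((q - 1) * ((N:ℝ) - 1)) := by
      rw [hapow _ ht]
      field_simp
    rw [h1, hσ_def]
    simp only
    rw [h4]
    have ha' : (a (‖y‖ ^ 2)) ^ ((N:ℝ) - 1)
        = A * (‖y‖ ^ 2 : ℝ) ^ ((q - 1) * ((N:ℝ) - 1)) / b (‖y‖ ^ 2) ^ ((N:ℝ) - 1) := hapow _ ht
    linear_combination (-(‖y‖ ^ 2 : ℝ) ^ (((N:ℝ) - 2) / 2)) * h2 +
      (-(‖y‖ ^ 2 : ℝ) ^ (((N:ℝ) - 2) / 2)) * ha' + (-A * (b (‖y‖ ^ 2) ^ ((N:ℝ) - 1))⁻¹) * h3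
  -- derivative of σ
  have hσderiv : ∀ t : ℝ, 0 < t → HasDerivAt σ (σ' t) t := by
    intro t ht
    have hbt := hb_pos t ht.le
    have h1 : HasDerivAt (fun s : ℝ => s ^ m) (m * t ^ (m - 1)) t :=
      Real.hasDerivAt_rpow_const (Or.inl ht.ne')
    have h2 : HasDerivAt b (lam * (q * t ^ (q - 1))) t := by
      rw [hb_def]
      exact ((Real.hasDerivAt_rpow_const (Or.inl ht.ne')).const_mul lam).const_add 1
    have h3 : HasDerivAt (fun s => b s ^ (1 - (N:ℝ)))
        (lam * (q * t ^ (q - 1)) * (1 - (N:ℝ)) * b t ^ (1 - (N:ℝ) - 1)) t :=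
      h2.rpow_const (Or.inl hbt.ne')
    have h4 := (h1.mul h3).const_mul (-A)
    rw [hσ_def, hσ'_def]
    exact h4
  -- key scalar identity
  have hcast : ((N - 1 : ℕ) : ℝ) = (N:ℝ) - 1 := by
    have h1 : 1 ≤ N := by omega
    push_cast [Nat.cast_sub h1]
    ring
  have hAC : A * ((N:ℝ) * (α + 1)) = C := by
    have h0 : 2 * (N:ℝ) * lam * q = ((N:ℝ) ^ 2 / ((N:ℝ) - 1)) * ((α + 1) * lam) := by
      rw [hq_def, hp_def]
      field_simp
    have hpos1 : (0:ℝ) < (N:ℝ) ^ 2 / ((N:ℝ) - 1) := by positivity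
    have hA2 : A = ((N:ℝ) ^ 2 / ((N:ℝ) - 1)) ^ (N - 1 : ℕ) *
        ((α + 1) ^ (N - 1 : ℕ) * lam ^ (N - 1 : ℕ)) := by
      rw [hA_def, h0, Real.mul_rpow hpos1.le (by positivity),
        Real.mul_rpow ha1.le hlam.le, ← hcast, Real.rpow_natCast, Real.rpow_natCast,
        Real.rpow_natCast]
    have hNs : N - 1 + 1 = N := by omega
    have hps : (α + 1) ^ N = (α + 1) ^ (N - 1) * (α + 1) := by
      rw [← pow_succ, hNs]
    rw [hA2, hC_def]
    unfold cconst
    rw [hps]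
    ring
  have hkey : ∀ t : ℝ, 0 < t → -((N:ℝ) * σ t + 2 * σ' t * t) = t ^ m * (C * b t ^ (-(N:ℝ))) := by
    intro t ht
    have hbt := hb_pos t ht.le
    have e1 : b t ^ (1 - (N:ℝ)) = b t * b t ^ (-(N:ℝ)) := by
      rw [show (1 - (N:ℝ)) = 1 + (-(N:ℝ)) by ring, Real.rpow_add hbt, Real.rpow_one]
    have e2 : b t ^ (1 - (N:ℝ) - 1) = b t ^ (-(N:ℝ)) := by
      congr 1
      ring
    have e3 : t ^ (m - 1) * t = t ^ m := by
      rw [← Real.rpow_add_one ht.ne' (m - 1)]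
      congr 1
      ring
    have e4 : t ^ (q - 1) * t = t ^ q := by
      rw [← Real.rpow_add_one ht.ne' (q - 1)]
      congr 1
      ring
    have hbt_eq : b t = 1 + lam * t ^ q := by rw [hb_def]
    rw [hσ_def, hσ'_def]
    simp only
    rw [e2, e1, hbt_eq]
    linear_combination (2 * A * m * ((1 + lam * t ^ q)) * b t ^ (-(N:ℝ))) * e3 +
      (2 * A * lam * q * (1 - (N:ℝ)) * t ^ m * b t ^ (-(N:ℝ))) * e4 +
      (A * b t ^ (-(N:ℝ)) * t ^ m * (1 + lam * t ^ q)) * hm2 +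
      (-(A * b t ^ (-(N:ℝ)) * t ^ m * lam * t ^ q)) * hq2 +
      (t ^ m * b t ^ (-(N:ℝ))) * hAC
  constructor
  · intro x hx
    have hxn : (0:ℝ) < ‖x‖ := norm_pos_iff.mpr hx
    set t : ℝ := ‖x‖ ^ 2 with ht_def
    have ht : 0 < t := by positivity
    -- the vector field agrees with σ-form near x
    set F : EuclideanSpace ℝ (Fin N) → EuclideanSpace ℝ (Fin N) :=
      fun y => ‖gradient (Ulam N α lam) y‖ ^ ((N : ℝ) - 2) • gradient (Ulam N α lam) y
      with hF_def
    have hFev : F =ᶠ[𝓝 x] fun y => σ (‖y‖ ^ 2) • y := by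
      filter_upwards [IsOpen.mem_nhds isOpen_compl_singleton hx] with y hy
      have hy' : y ≠ 0 := hy
      rw [hF_def]
      simp only
      rw [(hgrad y hy').gradient]
      exact hsigma_eq y hy'
    have hhasF : HasFDerivAt (fun y => σ (‖y‖ ^ 2) • y)
        (σ t • ContinuousLinearMap.id ℝ (EuclideanSpace ℝ (Fin N)) +
          ((σ' t) • (2 • innerSL ℝ x)).smulRight x) x := by
      have hsq : HasFDerivAt (fun y : EuclideanSpace ℝ (Fin N) => ‖y‖ ^ 2)
          (2 • innerSL ℝ x) x := (hasStrictFDerivAt_norm_sq x).hasFDerivAt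
      have hc : HasFDerivAt (fun y : EuclideanSpace ℝ (Fin N) => σ (‖y‖ ^ 2))
          ((σ' t) • (2 • innerSL ℝ x)) x := (hσderiv t ht).comp_hasFDerivAt (h₂ := σ)
            (f := fun y : EuclideanSpace ℝ (Fin N) => ‖y‖ ^ 2) x hsq
      exact hc.smul (hasFDerivAt_id x)
    have hfderiv : fderiv ℝ F x = σ t • ContinuousLinearMap.id ℝ (EuclideanSpace ℝ (Fin N)) +
        ((σ' t) • (2 • innerSL ℝ x)).smulRight x := by
      rw [hFev.fderiv_eq]
      exact hhasF.fderiv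
    have hsumsq : ∑ i, x i ^ 2 = t := by
      rw [ht_def, EuclideanSpace.norm_eq, Real.sq_sqrt (by positivity)]
      congr 1
      funext i
      rw [Real.norm_eq_abs, sq_abs]
    have hsum : ediv F x = (N:ℝ) * σ t + 2 * σ' t * t := by
      rw [ediv, hfderiv]
      simp only [ContinuousLinearMap.add_apply, ContinuousLinearMap.smul_apply,
        ContinuousLinearMap.id_apply, ContinuousLinearMap.smulRight_apply,
        ContinuousLinearMap.coe_smul', Pi.smul_apply, innerSL_apply_apply,
        PiLp.add_apply, PiLp.smul_apply, smul_eq_mul,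
        EuclideanSpace.inner_single_right, conj_trivial, mul_one,
        EuclideanSpace.single_apply]
      rw [Finset.sum_add_distrib]
      have hs1 : (∑ _i : Fin N, σ t * if True then 1 else 0) = (N:ℝ) * σ t := by
        simp [Finset.sum_const, Finset.card_fin, mul_comm]
      have hs2 : (∑ i : Fin N, σ' t * 2 • (1 * x i) * x i) = 2 * σ' t * t := by
        have h2i : ∀ i : Fin N, σ' t * 2 • (1 * x i) * x i = 2 * σ' t * x i ^ 2 := by
          intro i
          push_cast [nsmul_eq_mul]
          ring
        rw [Finset.sum_congr rfl fun i _ => h2i i, ← Finset.mul_sum, hsumsq]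
      rw [hs1, hs2]
    have hRHS : ‖x‖ ^ ((N:ℝ) * α) * Real.exp (Ulam N α lam x) = t ^ m * (C * b t ^ (-(N:ℝ))) := by
      have hbt := hb_pos t ht.le
      have h1 : ‖x‖ ^ ((N:ℝ) * α) = t ^ m := by
        rw [ht_def, ← Real.rpow_natCast ‖x‖ 2, ← Real.rpow_mul (norm_nonneg x)]
        congr 1
        push_cast
        linarith [hm2]
      have h2 : Real.exp (Ulam N α lam x) = C * b t ^ (-(N:ℝ)) := by
        rw [hUeq]
        simp only [← ht_def]
        rw [Real.exp_sub, Real.exp_log hC, mul_comm ((N:ℝ)) (Real.log (b t)),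
          ← Real.rpow_def_of_pos hbt, Real.rpow_neg hbt.le, div_eq_mul_inv]
      rw [h1, h2]
    rw [hsum, hRHS]
    exact hkey t ht
  · exact integrable_fun_norm_aux (by omega) (oneD_integrable N hN α lam hα hlam)
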